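/- Suppose Y ∈ L²(P) and g₀(1,X), g₀(0,X) ∈ L²(P). Set u := Y − g₀(Z,X) and v := D − m₀(Z,X). Then for every θ ∈ ℝ, E_P[ψ(W; θ, η₀)²] = E_P[(g₀(1,X) − g₀(0,X) − θ(m₀(1,X) − m₀(0,X)))²] + E_P[Z(u − θv)²/p₀(X)² + (1−Z)(u − θv)²/(1 − p₀(X))²], and consequently E_P[ψ(W; θ, η₀)²] ≥ E_P[(u − θv)²]/(1 − ε)². -/

import Mathlib

open MeasureTheory

/-- Two functions in L² have integrable product. -/
lemma aux_l2_mul_integrable {Ω : Type*} [MeasurableSpace Ω] {P : Measure Ω}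
    {f g : Ω → ℝ} (hf : MemLp f 2 P) (hg : MemLp g 2 P) :
    Integrable (fun ω => f ω * g ω) P := by
  have h1 : Integrable (fun ω => f ω ^ 2 + g ω ^ 2) P :=
    hf.integrable_sq.add hg.integrable_sq
  refine h1.mono' (hf.aestronglyMeasurable.mul hg.aestronglyMeasurable) ?_
  filter_upwards with ω
  have h2 : ‖f ω * g ω‖ = |f ω| * |g ω| := by rw [Real.norm_eq_abs, abs_mul]
  rw [h2]
  nlinarith [sq_nonneg (|f ω| - |g ω|), sq_abs (f ω), sq_abs (g ω), abs_nonneg (f ω),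
      abs_nonneg (g ω)]

/-- Overlap lemma: if the propensity score is bounded below by `ε > 0` and a property of `X`
fails a.s. on the event `Z = 1`, then it fails a.s. -/
lemma aux_overlap {Ω 𝒳 : Type*} [MeasurableSpace Ω] [MeasurableSpace 𝒳]
    (P : Measure Ω) [IsProbabilityMeasure P]
    (Z : Ω → ℝ) (X : Ω → 𝒳) (hZm : Measurable Z) (hXm : Measurable X)
    (hZval : ∀ ω, Z ω = 0 ∨ Z ω = 1)
    (p0 : 𝒳 → ℝ) (hp0m : Measurable p0)
    (hp0val : ∀ x, 0 ≤ p0 x ∧ p0 x ≤ 1)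
    (hcZ : P[Z | MeasurableSpace.comap X inferInstance] =ᵐ[P] fun ω => p0 (X ω))
    (ε : ℝ) (hε : 0 < ε) (hbd : ∀ᵐ ω ∂P, ε ≤ p0 (X ω))
    (B : Set 𝒳) (hB : MeasurableSet B)
    (h0 : ∀ᵐ ω ∂P, Z ω = 1 → X ω ∉ B) :
    ∀ᵐ ω ∂P, X ω ∉ B := by
  have hm : MeasurableSpace.comap X inferInstance ≤ (inferInstance : MeasurableSpace Ω) :=
    hXm.comap_le
  have hZint : Integrable Z P := by
    refine memLp_one_iff_integrable.mp
      (MemLp.of_bound hZm.aestronglyMeasurable 1 (Filter.Eventually.of_forall fun ω => ?_))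
    rcases hZval ω with h | h <;> simp [h]
  set s : Set Ω := X ⁻¹' B with hs
  have hsm : MeasurableSet[MeasurableSpace.comap X inferInstance] s := ⟨B, hB, rfl⟩
  have hsm' : MeasurableSet s := hXm hB
  have h1 : ∫ ω in s, Z ω ∂P = ∫ ω in s, p0 (X ω) ∂P := by
    rw [← setIntegral_condExp hm hZint hsm]
    refine setIntegral_congr_ae hsm' ?_
    filter_upwards [hcZ] with ω hω _
    exact hω
  have h2 : ∫ ω in s, Z ω ∂P = 0 := by
    have hz0 : ∀ᵐ ω ∂P, ω ∈ s → Z ω = 0 := by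
      filter_upwards [h0] with ω hω hmem
      rcases hZval ω with h | h
      · exact h
      · exact absurd hmem (hω h)
    calc ∫ ω in s, Z ω ∂P = ∫ _ω in s, (0 : ℝ) ∂P := setIntegral_congr_ae hsm' hz0
      _ = 0 := by simp
  have hint_p : Integrable (fun ω => p0 (X ω)) P := by
    refine memLp_one_iff_integrable.mp
      (MemLp.of_bound (hp0m.comp hXm).aestronglyMeasurable 1
        (Filter.Eventually.of_forall fun ω => ?_))
    have := hp0val (X ω)
    rw [Real.norm_eq_abs, abs_le]
    constructor <;> linarith [this.1, this.2]
  have h3 : ε * (P s).toReal ≤ ∫ ω in s, p0 (X ω) ∂P := by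
    have hmono : ∫ _ω in s, ε ∂P ≤ ∫ ω in s, p0 (X ω) ∂P :=
      setIntegral_mono_ae (integrableOn_const (measure_ne_top _ _))
        hint_p.integrableOn hbd
    rw [setIntegral_const, smul_eq_mul, mul_comm] at hmono
    exact hmono
  have h4 : (P s).toReal = 0 := by
    have h5 : ε * (P s).toReal ≤ 0 := by rw [← h1, h2] at h3; exact h3
    nlinarith [ENNReal.toReal_nonneg (a := P s)]
  have h5 : P s = 0 := by
    rcases (ENNReal.toReal_eq_zero_iff _).mp h4 with h | h
    · exact h
    · exact absurd h (measure_ne_top _ _)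
  exact measure_eq_zero_iff_ae_notMem.mp h5


set_option maxHeartbeats 1000000 in
theorem stmt3
    {Ω 𝒳 : Type*} [MeasurableSpace Ω] [MeasurableSpace 𝒳]
    (P : Measure Ω) [IsProbabilityMeasure P]
    (Y D Z : Ω → ℝ) (X : Ω → 𝒳)
    (hYm : Measurable Y) (hDm : Measurable D) (hZm : Measurable Z) (hXm : Measurable X)
    (hDval : ∀ ω, D ω = 0 ∨ D ω = 1) (hZval : ∀ ω, Z ω = 0 ∨ Z ω = 1)
    (g0 m0 : ℝ → 𝒳 → ℝ) (p0 : 𝒳 → ℝ)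
    (hg0m : Measurable (Function.uncurry g0)) (hm0m : Measurable (Function.uncurry m0))
    (hp0m : Measurable p0)
    (hp0val : ∀ x, 0 < p0 x ∧ p0 x < 1)
    (hcY : P[Y | MeasurableSpace.comap (fun ω => (Z ω, X ω)) inferInstance]
        =ᵐ[P] fun ω => g0 (Z ω) (X ω))
    (hcD : P[D | MeasurableSpace.comap (fun ω => (Z ω, X ω)) inferInstance]
        =ᵐ[P] fun ω => m0 (Z ω) (X ω))
    (hcZ : P[Z | MeasurableSpace.comap X inferInstance] =ᵐ[P] fun ω => p0 (X ω))
    (ε : ℝ) (hε : ε ∈ Set.Ioo (0 : ℝ) (1 / 2))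
    (hp0bd : ∀ᵐ ω ∂P, ε ≤ p0 (X ω) ∧ p0 (X ω) ≤ 1 - ε)
    -- square-integrability hypotheses
    (hY2 : MemLp Y 2 P)
    (hg01 : MemLp (fun ω => g0 1 (X ω)) 2 P)
    (hg00 : MemLp (fun ω => g0 0 (X ω)) 2 P)
    -- residuals
    (u v : Ω → ℝ)
    (hu : ∀ ω, u ω = Y ω - g0 (Z ω) (X ω))
    (hv : ∀ ω, v ω = D ω - m0 (Z ω) (X ω))
    -- the AR-type score evaluated at the true nuisance parameter η₀
    (ψ : ℝ → Ω → ℝ)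
    (hψ : ∀ θ ω, ψ θ ω =
      g0 1 (X ω) - g0 0 (X ω)
        + Z ω * (Y ω - g0 1 (X ω)) / p0 (X ω)
        - (1 - Z ω) * (Y ω - g0 0 (X ω)) / (1 - p0 (X ω))
        - θ * (m0 1 (X ω) - m0 0 (X ω)
            + Z ω * (D ω - m0 1 (X ω)) / p0 (X ω)
            - (1 - Z ω) * (D ω - m0 0 (X ω)) / (1 - p0 (X ω)))) :
    ∀ θ : ℝ,
      (∫ ω, (ψ θ ω) ^ 2 ∂P
        = (∫ ω, (g0 1 (X ω) - g0 0 (X ω) - θ * (m0 1 (X ω) - m0 0 (X ω))) ^ 2 ∂P)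
          + ∫ ω, (Z ω * (u ω - θ * v ω) ^ 2 / (p0 (X ω)) ^ 2
              + (1 - Z ω) * (u ω - θ * v ω) ^ 2 / (1 - p0 (X ω)) ^ 2) ∂P) ∧
      (∫ ω, (ψ θ ω) ^ 2 ∂P ≥ (∫ ω, (u ω - θ * v ω) ^ 2 ∂P) / (1 - ε) ^ 2) := by
  intro θ
  obtain ⟨hε0, hεhalf⟩ := hε
  have hε1 : ε < 1 := by linarith
  have hSmeas : Measurable fun ω => (Z ω, X ω) := hZm.prodMk hXm
  have hm : MeasurableSpace.comap (fun ω => (Z ω, X ω)) inferInstance ≤ (inferInstance : MeasurableSpace Ω) := hSmeas.comap_le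
  have hmX : MeasurableSpace.comap X inferInstance ≤ (inferInstance : MeasurableSpace Ω) := hXm.comap_le
  -- measurability of section functions
  have hg1m : Measurable fun x => g0 1 x := hg0m.comp (measurable_const.prodMk measurable_id)
  have hg0m' : Measurable fun x => g0 0 x := hg0m.comp (measurable_const.prodMk measurable_id)
  have hm1m : Measurable fun x => m0 1 x := hm0m.comp (measurable_const.prodMk measurable_id)
  have hm0m' : Measurable fun x => m0 0 x := hm0m.comp (measurable_const.prodMk measurable_id)
  have hgZXm : Measurable fun ω => g0 (Z ω) (X ω) := hg0m.comp hSmeas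
  have hmZXm : Measurable fun ω => m0 (Z ω) (X ω) := hm0m.comp hSmeas
  -- basic integrability
  have hZint : Integrable Z P := by
    refine memLp_one_iff_integrable.mp
      (MemLp.of_bound hZm.aestronglyMeasurable 1 (Filter.Eventually.of_forall fun ω => ?_))
    rcases hZval ω with h | h <;> simp [h]
  have hDint : Integrable D P := by
    refine memLp_one_iff_integrable.mp
      (MemLp.of_bound hDm.aestronglyMeasurable 1 (Filter.Eventually.of_forall fun ω => ?_))
    rcases hDval ω with h | h <;> simp [h]
  have hYint : Integrable Y P := hY2.integrable one_le_two
  -- a.e. bounds for m0 (Z, X)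
  have hm0ZX : ∀ᵐ ω ∂P, 0 ≤ m0 (Z ω) (X ω) ∧ m0 (Z ω) (X ω) ≤ 1 := by
    have hDnn : 0 ≤ᵐ[P] D := Filter.Eventually.of_forall fun ω => by
      rcases hDval ω with h | h <;> simp [h]
    have hD1 : D ≤ᵐ[P] fun _ => (1 : ℝ) := Filter.Eventually.of_forall fun ω => by
      rcases hDval ω with h | h <;> simp [h]
    have h0 : (0 : Ω → ℝ) ≤ᵐ[P] P[D|MeasurableSpace.comap (fun ω => (Z ω, X ω)) inferInstance] := condExp_nonneg hDnn
    have h1 : P[D|MeasurableSpace.comap (fun ω => (Z ω, X ω)) inferInstance] ≤ᵐ[P] P[(fun _ => (1 : ℝ))|MeasurableSpace.comap (fun ω => (Z ω, X ω)) inferInstance] :=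
      condExp_mono hDint (integrable_const (1 : ℝ)) hD1
    have hc : P[(fun _ : Ω => (1 : ℝ))|MeasurableSpace.comap (fun ω => (Z ω, X ω)) inferInstance] = fun _ => (1 : ℝ) := condExp_const hm (1 : ℝ)
    filter_upwards [hcD, h0, h1] with ω e1 e2 e3
    rw [hc] at e3
    rw [← e1]
    exact ⟨e2, e3⟩
  -- a.e. bounds for m0 1 X and m0 0 X via overlap
  have hp0val' : ∀ x, 0 ≤ p0 x ∧ p0 x ≤ 1 :=
    fun x => ⟨(hp0val x).1.le, (hp0val x).2.le⟩
  have hm01 : ∀ᵐ ω ∂P, 0 ≤ m0 1 (X ω) ∧ m0 1 (X ω) ≤ 1 := by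
    have hB : MeasurableSet ({x | 0 ≤ m0 1 x ∧ m0 1 x ≤ 1}ᶜ) :=
      ((measurableSet_le measurable_const hm1m).inter
        (measurableSet_le hm1m measurable_const)).compl
    have h0 : ∀ᵐ ω ∂P, Z ω = 1 → X ω ∉ ({x | 0 ≤ m0 1 x ∧ m0 1 x ≤ 1}ᶜ) := by
      filter_upwards [hm0ZX] with ω hω hz
      rw [hz] at hω
      simpa using hω
    have h := aux_overlap P Z X hZm hXm hZval p0 hp0m hp0val' hcZ ε hε0
      (by filter_upwards [hp0bd] with ω h; exact h.1) _ hB h0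
    filter_upwards [h] with ω hω
    simpa using hω
  have hm00 : ∀ᵐ ω ∂P, 0 ≤ m0 0 (X ω) ∧ m0 0 (X ω) ≤ 1 := by
    have hZ'val : ∀ ω, (1 : ℝ) - Z ω = 0 ∨ (1 : ℝ) - Z ω = 1 := fun ω => by
      rcases hZval ω with h | h <;> simp [h]
    have hZ'm : Measurable fun ω => (1 : ℝ) - Z ω := measurable_const.sub hZm
    have hcZ' : P[(fun ω => (1 : ℝ) - Z ω)|MeasurableSpace.comap X inferInstance] =ᵐ[P] fun ω => 1 - p0 (X ω) := by
      have h1 : (fun ω => (1 : ℝ) - Z ω) = (fun _ : Ω => (1 : ℝ)) - Z := rfl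
      rw [h1]
      have hc : P[(fun _ : Ω => (1 : ℝ))|MeasurableSpace.comap X inferInstance] = fun _ => (1 : ℝ) := condExp_const hmX (1 : ℝ)
      filter_upwards [condExp_sub (m := MeasurableSpace.comap X inferInstance) (integrable_const (1 : ℝ)) hZint, hcZ]
        with ω e1 e2
      rw [e1, Pi.sub_apply, hc, e2]
    have hp0'm : Measurable fun x => (1 : ℝ) - p0 x := measurable_const.sub hp0m
    have hp0'val : ∀ x, 0 ≤ 1 - p0 x ∧ 1 - p0 x ≤ 1 := fun x => by
      have := hp0val x; constructor <;> linarith [this.1, this.2]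
    have hB : MeasurableSet ({x | 0 ≤ m0 0 x ∧ m0 0 x ≤ 1}ᶜ) :=
      ((measurableSet_le measurable_const hm0m').inter
        (measurableSet_le hm0m' measurable_const)).compl
    have h0 : ∀ᵐ ω ∂P, (1 : ℝ) - Z ω = 1 → X ω ∉ ({x | 0 ≤ m0 0 x ∧ m0 0 x ≤ 1}ᶜ) := by
      filter_upwards [hm0ZX] with ω hω hz
      have hz0 : Z ω = 0 := by linarith [hz]
      rw [hz0] at hω
      simpa using hω
    have h := aux_overlap P (fun ω => (1 : ℝ) - Z ω) X hZ'm hXm hZ'val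
      (fun x => 1 - p0 x) hp0'm hp0'val hcZ' ε hε0
      (by filter_upwards [hp0bd] with ω h; linarith [h.2]) _ hB h0
    filter_upwards [h] with ω hω
    simpa using hω
  -- MemLp facts
  have hq1 : MemLp (fun ω => m0 1 (X ω)) 2 P := by
    refine MemLp.of_bound (hm1m.comp hXm).aestronglyMeasurable 1 ?_
    filter_upwards [hm01] with ω h
    rw [Real.norm_eq_abs, abs_le]; constructor <;> linarith [h.1, h.2]
  have hq0 : MemLp (fun ω => m0 0 (X ω)) 2 P := by
    refine MemLp.of_bound (hm0m'.comp hXm).aestronglyMeasurable 1 ?_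
    filter_upwards [hm00] with ω h
    rw [Real.norm_eq_abs, abs_le]; constructor <;> linarith [h.1, h.2]
  have hA2 : MemLp
      (fun ω => g0 1 (X ω) - g0 0 (X ω) - θ * (m0 1 (X ω) - m0 0 (X ω))) 2 P := by
    have h1 : MemLp (fun ω => g0 1 (X ω) - g0 0 (X ω)) 2 P := hg01.sub hg00
    have h2 : MemLp (fun ω => θ * (m0 1 (X ω) - m0 0 (X ω))) 2 P :=
      (hq1.sub hq0).const_mul θ
    exact h1.sub h2
  have hgZX2 : MemLp (fun ω => g0 (Z ω) (X ω)) 2 P := by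
    have hZg1 : MemLp (fun ω => Z ω * g0 1 (X ω)) 2 P := by
      refine MemLp.of_le hg01 (hZm.mul (hg1m.comp hXm)).aestronglyMeasurable
        (Filter.Eventually.of_forall fun ω => ?_)
      rcases hZval ω with h | h <;> simp [h]
    have hZg0 : MemLp (fun ω => (1 - Z ω) * g0 0 (X ω)) 2 P := by
      refine MemLp.of_le hg00 ((measurable_const.sub hZm).mul (hg0m'.comp hXm)).aestronglyMeasurable
        (Filter.Eventually.of_forall fun ω => ?_)
      rcases hZval ω with h | h <;> simp [h]
    have heq : (fun ω => g0 (Z ω) (X ω))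
        = fun ω => Z ω * g0 1 (X ω) + (1 - Z ω) * g0 0 (X ω) := by
      funext ω; rcases hZval ω with h | h <;> simp [h]
    rw [heq]; exact hZg1.add hZg0
  have humeas : Measurable u := by
    have : u = fun ω => Y ω - g0 (Z ω) (X ω) := funext hu
    rw [this]; exact hYm.sub hgZXm
  have hvmeas : Measurable v := by
    have : v = fun ω => D ω - m0 (Z ω) (X ω) := funext hv
    rw [this]; exact hDm.sub hmZXm
  have hu2 : MemLp u 2 P := by
    have : u = fun ω => Y ω - g0 (Z ω) (X ω) := funext hu
    rw [this]; exact hY2.sub hgZX2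
  have hv2 : MemLp v 2 P := by
    refine MemLp.of_bound hvmeas.aestronglyMeasurable 2 ?_
    filter_upwards [hm0ZX] with ω h
    rw [hv ω, Real.norm_eq_abs, abs_le]
    rcases hDval ω with hD | hD <;> rw [hD] <;> constructor <;> linarith [h.1, h.2]
  have hr2 : MemLp (fun ω => u ω - θ * v ω) 2 P := hu2.sub (hv2.const_mul θ)
  have hrmeas : Measurable (fun ω => u ω - θ * v ω) := humeas.sub (hvmeas.const_mul θ)
  -- the weight function w
  have hwm : Measurable (fun ω => Z ω / p0 (X ω) - (1 - Z ω) / (1 - p0 (X ω))) :=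
    (hZm.div (hp0m.comp hXm)).sub
      ((measurable_const.sub hZm).div (measurable_const.sub (hp0m.comp hXm)))
  have hwbd : ∀ᵐ ω ∂P, |Z ω / p0 (X ω) - (1 - Z ω) / (1 - p0 (X ω))| ≤ 1 / ε := by
    filter_upwards [hp0bd] with ω h
    obtain ⟨hp1, hp2⟩ := hp0val (X ω)
    rcases hZval ω with hz | hz
    · have he : Z ω / p0 (X ω) - (1 - Z ω) / (1 - p0 (X ω)) = -(1 / (1 - p0 (X ω))) := by
        rw [hz]; ring
      have hpp : (0 : ℝ) < 1 - p0 (X ω) := by linarith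
      rw [he, abs_neg, abs_of_pos (by positivity)]
      exact one_div_le_one_div_of_le hε0 (by linarith [h.2])
    · have he : Z ω / p0 (X ω) - (1 - Z ω) / (1 - p0 (X ω)) = 1 / p0 (X ω) := by
        rw [hz]; ring
      rw [he, abs_of_pos (by positivity)]
      exact one_div_le_one_div_of_le hε0 h.1
  -- the cross factor cf = 2 * A(X) * w is in L²
  have hcfmeas : Measurable (fun ω =>
      2 * (g0 1 (X ω) - g0 0 (X ω) - θ * (m0 1 (X ω) - m0 0 (X ω)))
        * (Z ω / p0 (X ω) - (1 - Z ω) / (1 - p0 (X ω)))) := by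
    exact (((((hg1m.comp hXm).sub (hg0m'.comp hXm)).sub
      (((hm1m.comp hXm).sub (hm0m'.comp hXm)).const_mul θ)).const_mul 2).mul hwm)
  have hcf2 : MemLp (fun ω =>
      2 * (g0 1 (X ω) - g0 0 (X ω) - θ * (m0 1 (X ω) - m0 0 (X ω)))
        * (Z ω / p0 (X ω) - (1 - Z ω) / (1 - p0 (X ω)))) 2 P := by
    refine MemLp.of_le (hA2.const_mul (2 / ε)) hcfmeas.aestronglyMeasurable ?_
    filter_upwards [hwbd] with ω hw
    set a := g0 1 (X ω) - g0 0 (X ω) - θ * (m0 1 (X ω) - m0 0 (X ω)) with ha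
    set b := Z ω / p0 (X ω) - (1 - Z ω) / (1 - p0 (X ω)) with hb
    have h1 : ‖2 * a * b‖ = 2 * |a| * |b| := by
      rw [Real.norm_eq_abs, abs_mul, abs_mul]; norm_num
    have h2 : ‖2 / ε * a‖ = 2 / ε * |a| := by
      rw [Real.norm_eq_abs, abs_mul, abs_of_pos (by positivity)]
    rw [h1, h2]
    calc 2 * |a| * |b| ≤ 2 * |a| * (1 / ε) :=
          mul_le_mul_of_nonneg_left hw (by positivity)
      _ = 2 / ε * |a| := by ring
  have hcross_int : Integrable (fun ω =>
      (2 * (g0 1 (X ω) - g0 0 (X ω) - θ * (m0 1 (X ω) - m0 0 (X ω)))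
        * (Z ω / p0 (X ω) - (1 - Z ω) / (1 - p0 (X ω)))) * (u ω - θ * v ω)) P :=
    aux_l2_mul_integrable hcf2 hr2
  -- w * r is in L²
  have hwr2 : MemLp (fun ω =>
      (Z ω / p0 (X ω) - (1 - Z ω) / (1 - p0 (X ω))) * (u ω - θ * v ω)) 2 P := by
    refine MemLp.of_le (hr2.const_mul (1 / ε)) (hwm.mul hrmeas).aestronglyMeasurable ?_
    filter_upwards [hwbd] with ω hw
    set b := Z ω / p0 (X ω) - (1 - Z ω) / (1 - p0 (X ω)) with hb
    set c := u ω - θ * v ω with hc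
    have h1 : ‖b * c‖ = |b| * |c| := by rw [Real.norm_eq_abs, abs_mul]
    have h2 : ‖1 / ε * c‖ = 1 / ε * |c| := by
      rw [Real.norm_eq_abs, abs_mul, abs_of_pos (by positivity)]
    rw [h1, h2]
    exact mul_le_mul_of_nonneg_right hw (abs_nonneg _)
  -- pointwise identities
  have hid3 : ∀ ω, ((Z ω / p0 (X ω) - (1 - Z ω) / (1 - p0 (X ω))) * (u ω - θ * v ω)) ^ 2
      = Z ω * (u ω - θ * v ω) ^ 2 / (p0 (X ω)) ^ 2
        + (1 - Z ω) * (u ω - θ * v ω) ^ 2 / (1 - p0 (X ω)) ^ 2 := by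
    intro ω
    obtain ⟨hp1, hp2⟩ := hp0val (X ω)
    have hne1 : p0 (X ω) ≠ 0 := ne_of_gt hp1
    have hne2 : (1 : ℝ) - p0 (X ω) ≠ 0 := by
      intro h; rw [sub_eq_zero] at h; exact absurd h.symm (ne_of_lt hp2)
    rcases hZval ω with hz | hz <;> rw [hz] <;> field_simp <;> ring
  have hT_int : Integrable (fun ω =>
      Z ω * (u ω - θ * v ω) ^ 2 / (p0 (X ω)) ^ 2
        + (1 - Z ω) * (u ω - θ * v ω) ^ 2 / (1 - p0 (X ω)) ^ 2) P :=
    hwr2.integrable_sq.congr (Filter.Eventually.of_forall fun ω => hid3 ω)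
  have hA2int : Integrable
      (fun ω => (g0 1 (X ω) - g0 0 (X ω) - θ * (m0 1 (X ω) - m0 0 (X ω))) ^ 2) P :=
    hA2.integrable_sq
  have hid2 : ∀ ω, (ψ θ ω) ^ 2 =
      (g0 1 (X ω) - g0 0 (X ω) - θ * (m0 1 (X ω) - m0 0 (X ω))) ^ 2
      + (2 * (g0 1 (X ω) - g0 0 (X ω) - θ * (m0 1 (X ω) - m0 0 (X ω)))
          * (Z ω / p0 (X ω) - (1 - Z ω) / (1 - p0 (X ω)))) * (u ω - θ * v ω)
      + (Z ω * (u ω - θ * v ω) ^ 2 / (p0 (X ω)) ^ 2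
          + (1 - Z ω) * (u ω - θ * v ω) ^ 2 / (1 - p0 (X ω)) ^ 2) := by
    intro ω
    obtain ⟨hp1, hp2⟩ := hp0val (X ω)
    have hne1 : p0 (X ω) ≠ 0 := ne_of_gt hp1
    have hne2 : (1 : ℝ) - p0 (X ω) ≠ 0 := by
      intro h; rw [sub_eq_zero] at h; exact absurd h.symm (ne_of_lt hp2)
    rcases hZval ω with hz | hz <;>
      simp only [hψ θ ω, hu ω, hv ω, hz] <;> field_simp <;> ring
  -- conditional expectations of residuals vanish
  haveI : SigmaFinite (P.trim hm) := inferInstance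
  have hgZX_sm : StronglyMeasurable[MeasurableSpace.comap (fun ω => (Z ω, X ω)) inferInstance] (fun ω => g0 (Z ω) (X ω)) :=
    (hg0m.comp (comap_measurable _)).stronglyMeasurable
  have hgZXint : Integrable (fun ω => g0 (Z ω) (X ω)) P := hgZX2.integrable one_le_two
  have hm0ZXint : Integrable (fun ω => m0 (Z ω) (X ω)) P := by
    refine memLp_one_iff_integrable.mp
      (MemLp.of_bound hmZXm.aestronglyMeasurable 1 ?_)
    filter_upwards [hm0ZX] with ω h
    rw [Real.norm_eq_abs, abs_le]; constructor <;> linarith [h.1, h.2]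
  have hm0ZX_sm : StronglyMeasurable[MeasurableSpace.comap (fun ω => (Z ω, X ω)) inferInstance] (fun ω => m0 (Z ω) (X ω)) :=
    (hm0m.comp (comap_measurable _)).stronglyMeasurable
  have hum0 : P[u|MeasurableSpace.comap (fun ω => (Z ω, X ω)) inferInstance] =ᵐ[P] (0 : Ω → ℝ) := by
    have hueq : u = Y - fun ω => g0 (Z ω) (X ω) := funext fun ω => hu ω
    rw [hueq]
    have h2 : P[(fun ω => g0 (Z ω) (X ω))|MeasurableSpace.comap (fun ω => (Z ω, X ω)) inferInstance] = fun ω => g0 (Z ω) (X ω) :=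
      condExp_of_stronglyMeasurable hm hgZX_sm hgZXint
    filter_upwards [condExp_sub (m := MeasurableSpace.comap (fun ω => (Z ω, X ω)) inferInstance) hYint hgZXint, hcY] with ω e1 e2
    rw [e1, Pi.sub_apply, h2, e2]
    simp
  have hvm0 : P[v|MeasurableSpace.comap (fun ω => (Z ω, X ω)) inferInstance] =ᵐ[P] (0 : Ω → ℝ) := by
    have hveq : v = D - fun ω => m0 (Z ω) (X ω) := funext fun ω => hv ω
    rw [hveq]
    have h2 : P[(fun ω => m0 (Z ω) (X ω))|MeasurableSpace.comap (fun ω => (Z ω, X ω)) inferInstance] = fun ω => m0 (Z ω) (X ω) :=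
      condExp_of_stronglyMeasurable hm hm0ZX_sm hm0ZXint
    filter_upwards [condExp_sub (m := MeasurableSpace.comap (fun ω => (Z ω, X ω)) inferInstance) hDint hm0ZXint, hcD] with ω e1 e2
    rw [e1, Pi.sub_apply, h2, e2]
    simp
  have hr0 : P[(fun ω => u ω - θ * v ω)|MeasurableSpace.comap (fun ω => (Z ω, X ω)) inferInstance] =ᵐ[P] (0 : Ω → ℝ) := by
    have hre : (fun ω => u ω - θ * v ω) = u - θ • v := rfl
    rw [hre]
    have huint : Integrable u P := hu2.integrable one_le_two
    have hvint : Integrable v P := hv2.integrable one_le_two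
    filter_upwards [condExp_sub (m := MeasurableSpace.comap (fun ω => (Z ω, X ω)) inferInstance) huint (hvint.smul θ),
      condExp_smul (m := MeasurableSpace.comap (fun ω => (Z ω, X ω)) inferInstance) (μ := P) θ v, hum0, hvm0] with ω e1 e2 e3 e4
    rw [e1, Pi.sub_apply, e3, e2, Pi.smul_apply, e4]
    simp
  -- the cross factor is MeasurableSpace.comap (fun ω => (Z ω, X ω)) inferInstance-strongly measurable
  have hcf_sm : StronglyMeasurable[MeasurableSpace.comap (fun ω => (Z ω, X ω)) inferInstance] (fun ω =>
      2 * (g0 1 (X ω) - g0 0 (X ω) - θ * (m0 1 (X ω) - m0 0 (X ω)))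
        * (Z ω / p0 (X ω) - (1 - Z ω) / (1 - p0 (X ω)))) := by
    have hF : Measurable (fun q : ℝ × 𝒳 =>
        2 * (g0 1 q.2 - g0 0 q.2 - θ * (m0 1 q.2 - m0 0 q.2))
          * (q.1 / p0 q.2 - (1 - q.1) / (1 - p0 q.2))) := by
      exact (((((hg1m.comp measurable_snd).sub (hg0m'.comp measurable_snd)).sub
          (((hm1m.comp measurable_snd).sub (hm0m'.comp measurable_snd)).const_mul θ)).const_mul
            2).mul
        ((measurable_fst.div (hp0m.comp measurable_snd)).sub
          ((measurable_const.sub measurable_fst).div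
            (measurable_const.sub (hp0m.comp measurable_snd)))))
    exact (hF.comp (comap_measurable _)).stronglyMeasurable
  have hrint : Integrable (fun ω => u ω - θ * v ω) P := hr2.integrable one_le_two
  -- the cross term integrates to zero
  have hcross0 : ∫ ω, (2 * (g0 1 (X ω) - g0 0 (X ω) - θ * (m0 1 (X ω) - m0 0 (X ω)))
      * (Z ω / p0 (X ω) - (1 - Z ω) / (1 - p0 (X ω)))) * (u ω - θ * v ω) ∂P = 0 := by
    have h1 := condExp_mul_of_stronglyMeasurable_left (μ := P) hcf_sm hcross_int hrint
    calc ∫ ω, (2 * (g0 1 (X ω) - g0 0 (X ω) - θ * (m0 1 (X ω) - m0 0 (X ω)))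
          * (Z ω / p0 (X ω) - (1 - Z ω) / (1 - p0 (X ω)))) * (u ω - θ * v ω) ∂P
        = ∫ ω, (P[(fun ω => 2 * (g0 1 (X ω) - g0 0 (X ω) - θ * (m0 1 (X ω) - m0 0 (X ω)))
            * (Z ω / p0 (X ω) - (1 - Z ω) / (1 - p0 (X ω))))
            * (fun ω => u ω - θ * v ω)|MeasurableSpace.comap (fun ω => (Z ω, X ω)) inferInstance]) ω ∂P :=
          (integral_condExp hm).symm
      _ = ∫ _ω, (0 : ℝ) ∂P := by
          refine integral_congr_ae ?_
          filter_upwards [h1, hr0] with ω e1 e2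
          rw [e1, Pi.mul_apply, e2]
          simp
      _ = 0 := by simp
  -- main equality
  have hEq : ∫ ω, (ψ θ ω) ^ 2 ∂P
      = (∫ ω, (g0 1 (X ω) - g0 0 (X ω) - θ * (m0 1 (X ω) - m0 0 (X ω))) ^ 2 ∂P)
        + ∫ ω, (Z ω * (u ω - θ * v ω) ^ 2 / (p0 (X ω)) ^ 2
            + (1 - Z ω) * (u ω - θ * v ω) ^ 2 / (1 - p0 (X ω)) ^ 2) ∂P := by
    have h1 : ∫ ω, (ψ θ ω) ^ 2 ∂P
        = ∫ ω, ((g0 1 (X ω) - g0 0 (X ω) - θ * (m0 1 (X ω) - m0 0 (X ω))) ^ 2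
          + (2 * (g0 1 (X ω) - g0 0 (X ω) - θ * (m0 1 (X ω) - m0 0 (X ω)))
              * (Z ω / p0 (X ω) - (1 - Z ω) / (1 - p0 (X ω)))) * (u ω - θ * v ω)
          + (Z ω * (u ω - θ * v ω) ^ 2 / (p0 (X ω)) ^ 2
              + (1 - Z ω) * (u ω - θ * v ω) ^ 2 / (1 - p0 (X ω)) ^ 2)) ∂P :=
      integral_congr_ae (Filter.Eventually.of_forall fun ω => hid2 ω)
    have e1 : ∫ ω, ((g0 1 (X ω) - g0 0 (X ω) - θ * (m0 1 (X ω) - m0 0 (X ω))) ^ 2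
          + (2 * (g0 1 (X ω) - g0 0 (X ω) - θ * (m0 1 (X ω) - m0 0 (X ω)))
              * (Z ω / p0 (X ω) - (1 - Z ω) / (1 - p0 (X ω)))) * (u ω - θ * v ω)
          + (Z ω * (u ω - θ * v ω) ^ 2 / (p0 (X ω)) ^ 2
              + (1 - Z ω) * (u ω - θ * v ω) ^ 2 / (1 - p0 (X ω)) ^ 2)) ∂P
        = (∫ ω, ((g0 1 (X ω) - g0 0 (X ω) - θ * (m0 1 (X ω) - m0 0 (X ω))) ^ 2
          + (2 * (g0 1 (X ω) - g0 0 (X ω) - θ * (m0 1 (X ω) - m0 0 (X ω)))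
              * (Z ω / p0 (X ω) - (1 - Z ω) / (1 - p0 (X ω)))) * (u ω - θ * v ω)) ∂P)
          + ∫ ω, (Z ω * (u ω - θ * v ω) ^ 2 / (p0 (X ω)) ^ 2
              + (1 - Z ω) * (u ω - θ * v ω) ^ 2 / (1 - p0 (X ω)) ^ 2) ∂P :=
      integral_add (hA2int.add hcross_int) hT_int
    have e2 : ∫ ω, ((g0 1 (X ω) - g0 0 (X ω) - θ * (m0 1 (X ω) - m0 0 (X ω))) ^ 2
          + (2 * (g0 1 (X ω) - g0 0 (X ω) - θ * (m0 1 (X ω) - m0 0 (X ω)))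
              * (Z ω / p0 (X ω) - (1 - Z ω) / (1 - p0 (X ω)))) * (u ω - θ * v ω)) ∂P
        = (∫ ω, (g0 1 (X ω) - g0 0 (X ω) - θ * (m0 1 (X ω) - m0 0 (X ω))) ^ 2 ∂P)
          + ∫ ω, (2 * (g0 1 (X ω) - g0 0 (X ω) - θ * (m0 1 (X ω) - m0 0 (X ω)))
              * (Z ω / p0 (X ω) - (1 - Z ω) / (1 - p0 (X ω)))) * (u ω - θ * v ω) ∂P :=
      integral_add hA2int hcross_int
    rw [h1, e1, e2, hcross0, add_zero]
  refine ⟨hEq, ?_⟩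
  -- the lower bound
  have hge1 : 0 ≤ ∫ ω, (g0 1 (X ω) - g0 0 (X ω) - θ * (m0 1 (X ω) - m0 0 (X ω))) ^ 2 ∂P :=
    integral_nonneg fun ω => sq_nonneg _
  have hTge : ∫ ω, (u ω - θ * v ω) ^ 2 / (1 - ε) ^ 2 ∂P
      ≤ ∫ ω, (Z ω * (u ω - θ * v ω) ^ 2 / (p0 (X ω)) ^ 2
          + (1 - Z ω) * (u ω - θ * v ω) ^ 2 / (1 - p0 (X ω)) ^ 2) ∂P := by
    refine integral_mono_ae (hr2.integrable_sq.div_const _) hT_int ?_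
    filter_upwards [hp0bd] with ω h
    obtain ⟨hp1, hp2⟩ := hp0val (X ω)
    rcases hZval ω with hz | hz <;> rw [hz]
    · have he : (0 : ℝ) * (u ω - θ * v ω) ^ 2 / (p0 (X ω)) ^ 2
          + (1 - 0) * (u ω - θ * v ω) ^ 2 / (1 - p0 (X ω)) ^ 2
          = (u ω - θ * v ω) ^ 2 / (1 - p0 (X ω)) ^ 2 := by ring
      rw [he]
      have hpp : (0 : ℝ) < 1 - p0 (X ω) := by linarith
      have hb : (0 : ℝ) < (1 - p0 (X ω)) ^ 2 := by positivity
      have hbc : (1 - p0 (X ω)) ^ 2 ≤ (1 - ε) ^ 2 := by nlinarith [h.1]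
      exact div_le_div_of_nonneg_left (sq_nonneg _) hb hbc
    · have he : (1 : ℝ) * (u ω - θ * v ω) ^ 2 / (p0 (X ω)) ^ 2
          + (1 - 1) * (u ω - θ * v ω) ^ 2 / (1 - p0 (X ω)) ^ 2
          = (u ω - θ * v ω) ^ 2 / (p0 (X ω)) ^ 2 := by ring
      rw [he]
      have hb : (0 : ℝ) < (p0 (X ω)) ^ 2 := by positivity
      have hbc : (p0 (X ω)) ^ 2 ≤ (1 - ε) ^ 2 := by nlinarith [h.2]
      exact div_le_div_of_nonneg_left (sq_nonneg _) hb hbc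
  have hdiv : ∫ ω, (u ω - θ * v ω) ^ 2 / (1 - ε) ^ 2 ∂P
      = (∫ ω, (u ω - θ * v ω) ^ 2 ∂P) / (1 - ε) ^ 2 := integral_div _ _
  rw [ge_iff_le, hEq, ← hdiv]
  linarith
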